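/- Let m_1, m_2 be odd positive integers with gcd(m_1, m_2) = 1, and let a be a complex number such that T_{m_1}(a) = 0 and T_{m_2}(a) = 0. Then a = 0. -/

import Mathlib

open Polynomial Real

theorem stmt_11 (m₁ m₂ : ℕ) (h₁ : 0 < m₁) (h₂ : 0 < m₂)
    (hodd₁ : Odd m₁) (hodd₂ : Odd m₂) (hgcd : Nat.gcd m₁ m₂ = 1) (a : ℂ)
    (e₁ : (Polynomial.Chebyshev.T ℂ m₁).eval a = 0)
    (e₂ : (Polynomial.Chebyshev.T ℂ m₂).eval a = 0) :
    a = 0 := by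
  obtain ⟨z, rfl⟩ := Complex.cos_surjective a
  rw [Polynomial.Chebyshev.T_complex_cos, Complex.cos_eq_zero_iff] at e₁ e₂
  obtain ⟨k₁, hk₁⟩ := e₁
  obtain ⟨k₂, hk₂⟩ := e₂
  have hπ : (Real.pi : ℂ) ≠ 0 := by exact_mod_cast Real.pi_ne_zero
  have hm₁ : ((m₁ : ℤ) : ℂ) ≠ 0 := by
    exact_mod_cast Nat.cast_ne_zero.mpr h₁.ne'
  have hm₂ : ((m₂ : ℤ) : ℂ) ≠ 0 := by
    exact_mod_cast Nat.cast_ne_zero.mpr h₂.ne'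
  -- m₂ * (2k₁+1) = m₁ * (2k₂+1)
  have key : (m₂ : ℤ) * (2 * k₁ + 1) = (m₁ : ℤ) * (2 * k₂ + 1) := by
    have hc : ((m₂ : ℤ) * (2 * k₁ + 1) : ℂ) * (π / 2) =
        ((m₁ : ℤ) * (2 * k₂ + 1) : ℂ) * (π / 2) := by
      push_cast
      have h1 := congrArg (fun w => ((m₂ : ℤ) : ℂ) * w) hk₁
      have h2 := congrArg (fun w => ((m₁ : ℤ) : ℂ) * w) hk₂
      push_cast at h1 h2
      calc ((m₂:ℕ):ℂ) * ((2 * k₁ + 1)) * (π / 2)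
          = (m₂:ℕ) * ((2 * k₁ + 1) * π / 2) := by ring
        _ = (m₂:ℕ) * ((m₁:ℕ) * z) := by rw [← h1]
        _ = (m₁:ℕ) * ((m₂:ℕ) * z) := by ring
        _ = (m₁:ℕ) * ((2 * k₂ + 1) * π / 2) := by rw [h2]
        _ = (m₁:ℕ) * (2 * k₂ + 1) * (π / 2) := by ring
    have hc2 : (((m₂ : ℤ) * (2 * k₁ + 1) : ℤ) : ℂ) =
        (((m₁ : ℤ) * (2 * k₂ + 1) : ℤ) : ℂ) := by
      have hne : (Real.pi : ℂ) / 2 ≠ 0 := div_ne_zero hπ two_ne_zero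
      exact mul_right_cancel₀ hne (by push_cast at hc ⊢; linear_combination hc)
    exact_mod_cast hc2
  have hcop : IsCoprime (m₁ : ℤ) (m₂ : ℤ) := by
    rw [Int.isCoprime_iff_gcd_eq_one]
    simpa using hgcd
  have hdvd : (m₁ : ℤ) ∣ 2 * k₁ + 1 := by
    have : (m₁ : ℤ) ∣ (m₂ : ℤ) * (2 * k₁ + 1) := ⟨2 * k₂ + 1, key⟩
    exact hcop.dvd_of_dvd_mul_left this
  obtain ⟨t, ht⟩ := hdvd
  have htodd : Odd t := by
    have hmul : Odd ((m₁ : ℤ) * t) := ht ▸ ⟨k₁, by ring⟩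
    exact (Int.odd_mul.mp hmul).2
  obtain ⟨s, hs⟩ := htodd
  have hint : (2 * k₁ + 1 : ℤ) = (m₁ : ℤ) * (2 * s + 1) := by rw [ht, hs]
  have hc : ((2 : ℂ) * k₁ + 1) = ((m₁ : ℕ) : ℂ) * (2 * (s : ℂ) + 1) := by
    exact_mod_cast hint
  have hz : z = (2 * (s : ℂ) + 1) * (Real.pi : ℂ) / 2 := by
    have h : ((m₁ : ℤ) : ℂ) * z = ((m₁ : ℤ) : ℂ) * ((2 * (s : ℂ) + 1) * (Real.pi : ℂ) / 2) := by
      rw [hk₁, hc]; push_cast; ring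
    exact mul_left_cancel₀ hm₁ h
  rw [Complex.cos_eq_zero_iff]
  exact ⟨s, by exact_mod_cast hz⟩
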